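/- arXiv:1203.5739 — 5 statements merged into one kernel-verified Lean document; each statement's English description precedes it below -/
import Mathlib

section
/- Under the hodograph setup, for every x ∈ Ω with y = Y(x): (i) the Legendre transform q(y) := x·y − p(x) satisfies q(y) = ½(|y|² + v(y)²); (ii) (1 + |Dv(y)|²)^{1/2} = (1 − |Du(x)|²)^{−1/2} and u(x) = v(y)·(1 + |Dv(y)|²)^{1/2}; (iii) ∇q(y) = x and the Hessian of q at y is the inverse matrix of the Hessian of p at x. -/
open scoped BigOperators Classical
open Filter

noncomputable section

abbrev Euc (n : ℕ) := EuclideanSpace ℝ (Fin n)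

/-- Coordinates of the gradient `Du` of `u` at `x`. -/
def grad {n : ℕ} (u : Euc n → ℝ) (x : Euc n) : Fin n → ℝ :=
  fun i => fderiv ℝ u x (EuclideanSpace.single i 1)

/-- `|Du|²` at `x`. -/
def gradSq {n : ℕ} (u : Euc n → ℝ) (x : Euc n) : ℝ := ∑ i, (grad u x i) ^ 2

/-- The Hessian matrix `D²u(x)`. -/
def hess {n : ℕ} (u : Euc n → ℝ) (x : Euc n) : Matrix (Fin n) (Fin n) ℝ :=
  Matrix.of fun i j =>
    iteratedFDeriv ℝ 2 u x ![EuclideanSpace.single i 1, EuclideanSpace.single j 1]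

/-- `w = (1 − |Du|²)^{1/2}`. -/
def wF {n : ℕ} (u : Euc n → ℝ) (x : Euc n) : ℝ := Real.sqrt (1 - gradSq u x)

/-- `γ[u] = I + (Du)(Du)ᵀ/(w(1+w))`. -/
def gammaM {n : ℕ} (u : Euc n → ℝ) (x : Euc n) : Matrix (Fin n) (Fin n) ℝ :=
  1 + Matrix.of (fun i j => grad u x i * grad u x j / (wF u x * (1 + wF u x)))

/-- `A[u] = (1/w)(I − u·γ[u]·(D²u)·γ[u])`. -/
def AM {n : ℕ} (u : Euc n → ℝ) (x : Euc n) : Matrix (Fin n) (Fin n) ℝ :=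
  (wF u x)⁻¹ • (1 - u x • (gammaM u x * hess u x * gammaM u x))

/-- Eigenvalues of a real symmetric matrix; junk value `0` otherwise. -/
def eigs {n : ℕ} (A : Matrix (Fin n) (Fin n) ℝ) : Fin n → ℝ :=
  if h : A.IsHermitian then h.eigenvalues else 0

/-- The de Sitter principal curvatures `κ[u](x)`: the eigenvalues of `A[u](x)`. -/
def curv {n : ℕ} (u : Euc n → ℝ) (x : Euc n) : Fin n → ℝ := eigs (AM u x)

/-- `u` is admissible on `Ω`: `u > 0`, `|Du| < 1` and `A[u]` positive definite. -/
def Admissible {n : ℕ} (Ω : Set (Euc n)) (u : Euc n → ℝ) : Prop :=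
  ∀ x ∈ Ω, 0 < u x ∧ gradSq u x < 1 ∧ (AM u x).PosDef

/-- The open positive cone `K`. -/
def Kcone (n : ℕ) : Set (Fin n → ℝ) := {lam | ∀ i, 0 < lam i}

/-- `∂Ω` is a `C^∞` hypersurface. -/
def HasSmoothBoundary {n : ℕ} (Ω : Set (Euc n)) : Prop :=
  ∀ x ∈ frontier Ω, ∃ (U : Set (Euc n)) (ρ : Euc n → ℝ),
    IsOpen U ∧ x ∈ U ∧ ContDiff ℝ (⊤ : ℕ∞) ρ ∧ (∀ y ∈ U, fderiv ℝ ρ y ≠ 0) ∧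
    Ω ∩ U = {y ∈ U | ρ y < 0} ∧ frontier Ω ∩ U = {y ∈ U | ρ y = 0}

open scoped RealInnerProductSpace

section LegendreAux

open InnerProductSpace

variable {n : ℕ}

private lemma hess_apply_aux (f : Euc n → ℝ) (x : Euc n) (i j : Fin n) :
    hess f x i j
      = fderiv ℝ (fderiv ℝ f) x (EuclideanSpace.single i 1) (EuclideanSpace.single j 1) := by
  rw [hess, Matrix.of_apply, iteratedFDeriv_two_apply]
  simp

private lemma sum_smul_single_aux (z : Euc n) :
    ∑ i, z i • EuclideanSpace.single i (1:ℝ) = z := by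
  simpa [EuclideanSpace.basisFun_apply] using (EuclideanSpace.basisFun (Fin n) ℝ).sum_repr z

private def tdCLM (n : ℕ) : Euc n →L[ℝ] StrongDual ℝ (Euc n) where
  toFun := fun z => InnerProductSpace.toDual ℝ (Euc n) z
  map_add' := fun a b => by simp
  map_smul' := fun r a => by simp
  cont := (InnerProductSpace.toDual ℝ (Euc n)).continuous

private lemma inner_eq_sum_aux (y z : Euc n) : ⟪y, z⟫ = ∑ j, y j * z j := by
  rw [PiLp.inner_apply]; simp [RCLike.inner_apply, conj_trivial, mul_comm]

private lemma hasFDerivAt_p_aux (u p : Euc n → ℝ)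
    (hp : ∀ x, p x = (⟪x, x⟫ - (u x) ^ 2) / 2)
    (x : Euc n) (hg : HasGradientAt u (gradient u x) x) :
    HasFDerivAt p (InnerProductSpace.toDual ℝ (Euc n) (x - u x • gradient u x)) x := by
  have hu' : HasFDerivAt u (InnerProductSpace.toDual ℝ (Euc n) (gradient u x)) x :=
    hasGradientAt_iff_hasFDerivAt.1 hg
  have h1 : HasFDerivAt (fun y : Euc n => ⟪y, y⟫)
      ((fderivInnerCLM ℝ (x, x)).comp
        ((ContinuousLinearMap.id ℝ (Euc n)).prod (ContinuousLinearMap.id ℝ (Euc n)))) x :=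
    (hasFDerivAt_id x).inner ℝ (hasFDerivAt_id x)
  have h2 : HasFDerivAt (fun y => u y * u y)
      (u x • (InnerProductSpace.toDual ℝ (Euc n) (gradient u x))
        + u x • (InnerProductSpace.toDual ℝ (Euc n) (gradient u x))) x := hu'.mul hu'
  have h3 := ((h1.sub h2).const_mul ((2:ℝ)⁻¹))
  have hpe : p = fun y => 2⁻¹ * (⟪y, y⟫ - u y * u y) := by
    funext y; rw [hp y]; ring
  rw [hpe]
  refine h3.congr_fderiv ?_
  refine ContinuousLinearMap.ext (M₁ := Euc n) (M₂ := ℝ) (σ₁₂ := RingHom.id ℝ) fun h => ?_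
  simp only [ContinuousLinearMap.smul_apply, ContinuousLinearMap.sub_apply,
    ContinuousLinearMap.add_apply, ContinuousLinearMap.comp_apply, ContinuousLinearMap.prod_apply,
    ContinuousLinearMap.id_apply, fderivInnerCLM_apply, InnerProductSpace.toDual_apply_apply,
    inner_sub_left, real_inner_smul_left, smul_eq_mul]
  rw [real_inner_comm h x]
  ring

end LegendreAux


set_option maxHeartbeats 1000000 in
/-- Lemma 2.1: the Legendre transform of `p = ½(|x|² − u²)` under the
hodograph map `Y = ∇p = x − u Du` is `q(y) = ½(|y|² + v(y)²)` where
`v(Y x) = u·(1 − |Du|²)^{1/2}`; moreover `∇q(Y x) = x` and `D²q(Y x) = (D²p(x))⁻¹`. -/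
theorem legendre_transform_identities
    (n : ℕ) (Ω : Set (Euc n)) (hΩ : IsOpen Ω)
    (u : Euc n → ℝ) (hu : ContDiffOn ℝ (⊤ : ℕ∞) u Ω)
    (hupos : ∀ x ∈ Ω, 0 < u x)
    (hspace : ∀ x ∈ Ω, ‖gradient u x‖ < 1)
    (p : Euc n → ℝ) (hp : ∀ x, p x = (⟪x, x⟫ - (u x) ^ 2) / 2)
    (hconv : ∀ x ∈ Ω, (hess p x).PosDef)
    (Y : Euc n → Euc n) (hY : ∀ x, Y x = x - u x • gradient u x)
    (hinj : Set.InjOn Y Ω) (hopen : IsOpen (Y '' Ω))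
    (v : Euc n → ℝ)
    (hv : ∀ x ∈ Ω, v (Y x) = u x * Real.sqrt (1 - ‖gradient u x‖ ^ 2))
    (q : Euc n → ℝ) (hq : ∀ x ∈ Ω, q (Y x) = ⟪x, Y x⟫ - p x) :
    ∀ x ∈ Ω,
      q (Y x) = (‖Y x‖ ^ 2 + (v (Y x)) ^ 2) / 2 ∧
      Real.sqrt (1 + ‖gradient v (Y x)‖ ^ 2)
        = (Real.sqrt (1 - ‖gradient u x‖ ^ 2))⁻¹ ∧
      u x = v (Y x) * Real.sqrt (1 + ‖gradient v (Y x)‖ ^ 2) ∧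
      gradient q (Y x) = x ∧
      hess q (Y x) = (hess p x)⁻¹ := by
  classical
  have h1top : (1:WithTop ℕ∞) ≤ ((⊤:ℕ∞):WithTop ℕ∞) := by exact_mod_cast le_top
  have h1top' : ((⊤:ℕ∞):WithTop ℕ∞) ≠ 0 := by simp
  -- gradient of u is smooth on Ω
  have hgu : ContDiffOn ℝ (⊤:ℕ∞) (gradient u) Ω := by
    have h1 : ContDiffOn ℝ (⊤:ℕ∞) (fderiv ℝ u) Ω := hu.fderiv_of_isOpen hΩ (by simp)
    exact (InnerProductSpace.toDual ℝ (Euc n)).symm.contDiff.comp_contDiffOn h1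
  have hugrad : ∀ x ∈ Ω, HasGradientAt u (gradient u x) x := fun x hx =>
    ((hu.contDiffAt (hΩ.mem_nhds hx)).differentiableAt h1top').hasGradientAt
  -- p has derivative toDual (Y x) at points of Ω
  have hpd : ∀ x ∈ Ω, HasFDerivAt p ((InnerProductSpace.toDual ℝ (Euc n)) (Y x)) x := fun x hx => by
    rw [hY x]; exact hasFDerivAt_p_aux u p hp x (hugrad x hx)
  -- Y is smooth on Ω
  have hYc : ContDiffOn ℝ (⊤:ℕ∞) Y Ω := by
    have h2 : ContDiffOn ℝ (⊤:ℕ∞) (fun x => x - u x • gradient u x) Ω :=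
      contDiffOn_id.sub (hu.smul hgu)
    exact h2.congr fun x _ => hY x
  have hw : ∀ x ∈ Ω, 0 < 1 - ‖gradient u x‖^2 := fun x hx => by
    nlinarith [hspace x hx, norm_nonneg (gradient u x)]
  -- part (i) for all points of Ω
  have key1 : ∀ x ∈ Ω, q (Y x) = (‖Y x‖ ^ 2 + (v (Y x)) ^ 2) / 2 := by
    intro x hx
    have hw2 : Real.sqrt (1 - ‖gradient u x‖^2) ^ 2 = 1 - ‖gradient u x‖^2 :=
      Real.sq_sqrt (hw x hx).le
    rw [hq x hx, hv x hx, hp x, hY x, mul_pow, hw2]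
    have hnorm : ‖x - u x • gradient u x‖^2
        = ‖x‖^2 - 2*(u x * ⟪x, gradient u x⟫) + (u x)^2 * ‖gradient u x‖^2 := by
      rw [norm_sub_sq_real, real_inner_smul_right, norm_smul]
      simp only [Real.norm_eq_abs, mul_pow, sq_abs]
      try ring
    rw [hnorm, inner_sub_right, real_inner_smul_right, real_inner_self_eq_norm_sq]
    ring
  intro x₀ hx₀
  -- derivative of Y and entries of hess p
  have hYd : ∀ x ∈ Ω, HasFDerivAt Y (fderiv ℝ Y x) x := fun x hx =>
    (((hYc.contDiffAt (hΩ.mem_nhds hx))).differentiableAt h1top').hasFDerivAt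
  have hessp : ∀ x ∈ Ω, ∀ i j, hess p x i j
      = ⟪fderiv ℝ Y x (EuclideanSpace.single i 1), EuclideanSpace.single j 1⟫ := by
    intro x hx i j
    rw [hess_apply_aux]
    have hev : fderiv ℝ p =ᶠ[nhds x] fun z => (InnerProductSpace.toDual ℝ (Euc n)) (Y z) :=
      Filter.eventuallyEq_of_mem (hΩ.mem_nhds hx) (fun z hz => (hpd z hz).fderiv)
    rw [hev.fderiv_eq]
    have hL : HasFDerivAt (fun z => (InnerProductSpace.toDual ℝ (Euc n)) (Y z)) ((tdCLM n).comp (fderiv ℝ Y x)) x :=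
      ((tdCLM n).hasFDerivAt).comp x (hYd x hx)
    rw [hL.fderiv]
    rfl
  set A := fderiv ℝ Y x₀ with hAdef
  -- the quadratic form of hess p x₀ is ⟪A z, z⟫
  have hquad : ∀ z : Euc n,
      dotProduct (fun i => z i) ((hess p x₀).mulVec fun i => z i) = ⟪A z, z⟫ := by
    intro z
    have hstep : dotProduct (fun i => z i) ((hess p x₀).mulVec fun i => z i)
        = ∑ i, z i * ∑ j, hess p x₀ i j * z j := by
      simp [dotProduct, Matrix.mulVec]
    rw [hstep]
    calc ∑ i, z i * ∑ j, hess p x₀ i j * z j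
        = ∑ i, z i * ⟪A (EuclideanSpace.single i 1), z⟫ := by
          refine Finset.sum_congr rfl fun i _ => ?_
          rw [inner_eq_sum_aux]
          congr 1
          refine Finset.sum_congr rfl fun j _ => ?_
          rw [hessp x₀ hx₀ i j, EuclideanSpace.inner_single_right]
          simp [hAdef]
      _ = ⟪A z, z⟫ := by
          have hAz : A z = ∑ i, z i • A (EuclideanSpace.single i 1) := by
            conv_lhs => rw [← sum_smul_single_aux z]
            rw [map_sum]
            simp only [map_smul]
          rw [hAz, sum_inner]
          refine (Finset.sum_congr rfl fun i _ => ?_).symm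
          rw [real_inner_smul_left]
  -- A is injective hence invertible
  have hAinj : Function.Injective A := by
    intro z₁ z₂ hzz
    by_contra hne
    have hz0 : z₁ - z₂ ≠ 0 := sub_ne_zero.2 hne
    have hz0' : (fun i => (z₁ - z₂) i) ≠ (0 : Fin n → ℝ) := by
      intro hc
      apply hz0
      ext i
      exact congrFun hc i
    have hpos := (hconv x₀ hx₀).dotProduct_mulVec_pos hz0'
    have hpos' : (0:ℝ) < dotProduct (fun i => (z₁ - z₂) i)
        ((hess p x₀).mulVec fun i => (z₁ - z₂) i) := by simpa using hpos
    have hzero : A (z₁ - z₂) = 0 := by rw [map_sub, hzz, sub_self]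
    have hq0 := hquad (z₁ - z₂)
    rw [hzero, inner_zero_left] at hq0
    rw [hq0] at hpos'
    exact lt_irrefl 0 hpos'
  have hAbij : Function.Bijective A.toLinearMap :=
    ⟨hAinj, (LinearMap.injective_iff_surjective).1 hAinj⟩
  set A' : Euc n ≃L[ℝ] Euc n :=
    (LinearEquiv.ofBijective A.toLinearMap hAbij).toContinuousLinearEquiv with hA'def
  have hcoe : (A' : Euc n →L[ℝ] Euc n) = A := by ext z; rfl
  -- local inverse g
  have hcY : ContDiffAt ℝ (⊤:ℕ∞) Y x₀ := hYc.contDiffAt (hΩ.mem_nhds hx₀)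
  have hfY' : HasFDerivAt Y (A' : Euc n →L[ℝ] Euc n) x₀ := by rw [hcoe]; exact hYd x₀ hx₀
  set g : Euc n → Euc n := hcY.localInverse hfY' h1top' with hgdef
  have hstrict : HasStrictFDerivAt Y (A' : Euc n →L[ℝ] Euc n) x₀ :=
    hcY.hasStrictFDerivAt' hfY' h1top'
  have hg0 : g (Y x₀) = x₀ := hcY.localInverse_apply_image hfY' h1top'
  have hgc : ContDiffAt ℝ (⊤:ℕ∞) g (Y x₀) := hcY.to_localInverse hfY' h1top'
  have hri : ∀ᶠ y in nhds (Y x₀), Y (g y) = y := hstrict.eventually_right_inverse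
  have hgB : HasFDerivAt g ((A'.symm : Euc n →L[ℝ] Euc n)) (Y x₀) :=
    hstrict.to_localInverse.hasFDerivAt
  have hgo : ∀ᶠ y in nhds (Y x₀), g y ∈ Ω := by
    refine hgc.continuousAt.eventually_mem ?_
    rw [hg0]; exact hΩ.mem_nhds hx₀
  -- local formula for q and v
  have hq_ev : q =ᶠ[nhds (Y x₀)] fun y => ⟪g y, y⟫ - p (g y) := by
    filter_upwards [hgo, hri] with y hy hyr
    conv_lhs => rw [← hyr]
    rw [hq (g y) hy, hyr]
  have hv_ev : v =ᶠ[nhds (Y x₀)]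
      fun y => u (g y) * Real.sqrt (1 - ‖gradient u (g y)‖ ^ 2) := by
    filter_upwards [hgo, hri] with y hy hyr
    conv_lhs => rw [← hyr]
    rw [hv (g y) hy]
  -- q has derivative toDual (g y) near Y x₀
  have hgd_ev : ∀ᶠ y in nhds (Y x₀), DifferentiableAt ℝ g y := by
    have := (hgc.of_le h1top).eventually (by simp)
    exact this.mono fun y hy => hy.differentiableAt one_ne_zero
  have hqgrad : ∀ᶠ y in nhds (Y x₀), HasFDerivAt q ((InnerProductSpace.toDual ℝ (Euc n)) (g y)) y := by
    filter_upwards [hgo, hri, hgd_ev, hq_ev.eventually_nhds] with y hy hyr hyd hqev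
    have hBy : HasFDerivAt g (fderiv ℝ g y) y := hyd.hasFDerivAt
    have hterm1 : HasFDerivAt (fun z => ⟪g z, z⟫)
        ((fderivInnerCLM ℝ (g y, y)).comp
          ((fderiv ℝ g y).prod (ContinuousLinearMap.id ℝ (Euc n)))) y :=
      hBy.inner ℝ (hasFDerivAt_id y)
    have hterm2 : HasFDerivAt (fun z => p (g z)) (((InnerProductSpace.toDual ℝ (Euc n)) (Y (g y))).comp (fderiv ℝ g y)) y :=
      (hpd (g y) hy).comp y hBy
    rw [hyr] at hterm2
    have hsub := hterm1.sub hterm2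
    have h2 : HasFDerivAt q
        ((fderivInnerCLM ℝ (g y, y)).comp
          ((fderiv ℝ g y).prod (ContinuousLinearMap.id ℝ (Euc n)))
          - ((InnerProductSpace.toDual ℝ (Euc n)) y).comp (fderiv ℝ g y)) y :=
      hsub.congr_of_eventuallyEq hqev
    refine h2.congr_fderiv ?_
    refine ContinuousLinearMap.ext (M₁ := Euc n) (M₂ := ℝ) (σ₁₂ := RingHom.id ℝ) fun h => ?_
    simp only [ContinuousLinearMap.sub_apply, ContinuousLinearMap.comp_apply,
      ContinuousLinearMap.prod_apply, ContinuousLinearMap.id_apply, fderivInnerCLM_apply,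
      InnerProductSpace.toDual_apply_apply]
    rw [real_inner_comm y (fderiv ℝ g y h)]
    ring
  have hqx₀ : HasFDerivAt q ((InnerProductSpace.toDual ℝ (Euc n)) x₀) (Y x₀) := by
    have := hqgrad.self_of_nhds
    rwa [hg0] at this
  have hgradq : gradient q (Y x₀) = x₀ :=
    (hasGradientAt_iff_hasFDerivAt.2 hqx₀).gradient
  -- Hessian of q
  have hfq_ev : fderiv ℝ q =ᶠ[nhds (Y x₀)] fun y => (InnerProductSpace.toDual ℝ (Euc n)) (g y) :=
    hqgrad.mono fun y hy => hy.fderiv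
  have hessq : ∀ i j, hess q (Y x₀) i j
      = ⟪(A'.symm : Euc n →L[ℝ] Euc n) (EuclideanSpace.single i 1),
          EuclideanSpace.single j 1⟫ := by
    intro i j
    rw [hess_apply_aux, hfq_ev.fderiv_eq]
    have hL : HasFDerivAt (fun y => (InnerProductSpace.toDual ℝ (Euc n)) (g y))
        ((tdCLM n).comp (A'.symm : Euc n →L[ℝ] Euc n)) (Y x₀) :=
      ((tdCLM n).hasFDerivAt).comp (Y x₀) hgB
    rw [hL.fderiv]
    rfl
  have hmul : hess p x₀ * hess q (Y x₀) = 1 := by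
    ext i j
    rw [Matrix.mul_apply, Matrix.one_apply]
    have hBA : (A'.symm : Euc n →L[ℝ] Euc n) (A (EuclideanSpace.single i 1))
        = EuclideanSpace.single i 1 := by
      rw [← hcoe]
      exact A'.symm_apply_apply _
    calc ∑ k, hess p x₀ i k * hess q (Y x₀) k j
        = ∑ k, ⟪(A (EuclideanSpace.single i 1)) k
            • (A'.symm : Euc n →L[ℝ] Euc n) (EuclideanSpace.single k 1),
            EuclideanSpace.single j 1⟫ := by
          refine Finset.sum_congr rfl fun k _ => ?_
          rw [hessp x₀ hx₀ i k, hessq k j, real_inner_smul_left,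
            EuclideanSpace.inner_single_right]
          simp [hAdef]
      _ = ⟪(A'.symm : Euc n →L[ℝ] Euc n)
            (∑ k, (A (EuclideanSpace.single i 1)) k • EuclideanSpace.single k 1),
            EuclideanSpace.single j 1⟫ := by
          rw [map_sum, sum_inner]
          refine (Finset.sum_congr rfl fun k _ => ?_).symm
          rw [map_smul]
      _ = ⟪(EuclideanSpace.single i (1:ℝ) : Euc n), EuclideanSpace.single j 1⟫ := by
          rw [sum_smul_single_aux, hBA]
      _ = (if i = j then 1 else 0) := by
          rw [EuclideanSpace.inner_single_right]
          simp [EuclideanSpace.single_apply, eq_comm]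
  have hhessq : hess q (Y x₀) = (hess p x₀)⁻¹ := (Matrix.inv_eq_right_inv hmul).symm
  -- differentiability of v at Y x₀
  have hgdiff : DifferentiableAt ℝ g (Y x₀) := hgB.differentiableAt
  have hudiff : DifferentiableAt ℝ u (g (Y x₀)) := by
    rw [hg0]
    exact (hu.contDiffAt (hΩ.mem_nhds hx₀)).differentiableAt h1top'
  have hgudiff : DifferentiableAt ℝ (gradient u) (g (Y x₀)) := by
    rw [hg0]
    exact (hgu.contDiffAt (hΩ.mem_nhds hx₀)).differentiableAt h1top'
  have hvd : DifferentiableAt ℝ v (Y x₀) := by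
    have h1 : DifferentiableAt ℝ (fun y => u (g y)) (Y x₀) := hudiff.comp (Y x₀) hgdiff
    have h2 : DifferentiableAt ℝ (fun y => gradient u (g y)) (Y x₀) :=
      hgudiff.comp (Y x₀) hgdiff
    have h3 : DifferentiableAt ℝ (fun y => ‖gradient u (g y)‖ ^ 2) (Y x₀) := by
      exact ((contDiff_norm_sq ℝ (n := 1)).differentiable
        (by simp)).differentiableAt.comp (Y x₀) h2
    have h4 : DifferentiableAt ℝ (fun y => 1 - ‖gradient u (g y)‖ ^ 2) (Y x₀) :=
      (differentiableAt_const 1).sub h3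
    have h5 : DifferentiableAt ℝ
        (fun y => Real.sqrt (1 - ‖gradient u (g y)‖ ^ 2)) (Y x₀) := by
      refine h4.sqrt ?_
      rw [hg0]
      exact (hw x₀ hx₀).ne'
    exact (hv_ev.differentiableAt_iff).2 (h1.mul h5)
  have hvf : HasFDerivAt v ((InnerProductSpace.toDual ℝ (Euc n)) (gradient v (Y x₀))) (Y x₀) :=
    hasGradientAt_iff_hasFDerivAt.1 hvd.hasGradientAt
  -- eventual identity q = (‖y‖² + v²)/2
  have hq_ev2 : q =ᶠ[nhds (Y x₀)] fun y => (‖y‖ ^ 2 + v y ^ 2) / 2 := by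
    filter_upwards [hgo, hri] with y hy hyr
    conv_lhs => rw [← hyr]
    rw [key1 (g y) hy, hyr]
  -- differentiate it
  have hDrhs : HasFDerivAt (fun y : Euc n => (‖y‖ ^ 2 + v y ^ 2) / 2)
      (((2:ℝ)⁻¹) • (((fderivInnerCLM ℝ ((Y x₀), (Y x₀))).comp
          ((ContinuousLinearMap.id ℝ (Euc n)).prod (ContinuousLinearMap.id ℝ (Euc n))))
        + (v (Y x₀) • (InnerProductSpace.toDual ℝ (Euc n)) (gradient v (Y x₀)) + v (Y x₀) • (InnerProductSpace.toDual ℝ (Euc n)) (gradient v (Y x₀))))) (Y x₀) := by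
    have h1 : HasFDerivAt (fun y : Euc n => ⟪y, y⟫)
        ((fderivInnerCLM ℝ ((Y x₀), (Y x₀))).comp
          ((ContinuousLinearMap.id ℝ (Euc n)).prod (ContinuousLinearMap.id ℝ (Euc n)))) (Y x₀) :=
      (hasFDerivAt_id _).inner ℝ (hasFDerivAt_id _)
    have h2 : HasFDerivAt (fun y => v y * v y)
        (v (Y x₀) • (InnerProductSpace.toDual ℝ (Euc n)) (gradient v (Y x₀)) + v (Y x₀) • (InnerProductSpace.toDual ℝ (Euc n)) (gradient v (Y x₀))) (Y x₀) :=
      hvf.mul hvf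
    have hfe : (fun y : Euc n => (‖y‖ ^ 2 + v y ^ 2) / 2)
        = fun y : Euc n => 2⁻¹ * (⟪y, y⟫ + v y * v y) := by
      funext y
      rw [real_inner_self_eq_norm_sq]
      ring
    rw [hfe]
    exact HasFDerivAt.const_mul (𝕜 := ℝ) (h1.add h2) ((2:ℝ)⁻¹)
  have hfeq : fderiv ℝ q (Y x₀)
      = fderiv ℝ (fun y : Euc n => (‖y‖ ^ 2 + v y ^ 2) / 2) (Y x₀) := hq_ev2.fderiv_eq
  rw [hqx₀.fderiv, hDrhs.fderiv] at hfeq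
  -- the vector identity x₀ = Y x₀ + v • ∇v
  have hvec : x₀ = Y x₀ + v (Y x₀) • gradient v (Y x₀) := by
    apply ext_inner_right ℝ
    intro z
    have happ := congrFun (congrArg (fun (L : Euc n →L[ℝ] ℝ) => (L : Euc n → ℝ)) hfeq) z
    simp only [ContinuousLinearMap.smul_apply, ContinuousLinearMap.add_apply,
      ContinuousLinearMap.comp_apply, ContinuousLinearMap.prod_apply,
      ContinuousLinearMap.id_apply, fderivInnerCLM_apply, InnerProductSpace.toDual_apply_apply,
      smul_eq_mul] at happ
    rw [inner_add_left, real_inner_smul_left]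
    rw [happ, real_inner_comm z (Y x₀)]
    ring
  set w := Real.sqrt (1 - ‖gradient u x₀‖ ^ 2) with hwdef
  have hwpos : 0 < w := Real.sqrt_pos.2 (hw x₀ hx₀)
  have hw2 : w ^ 2 = 1 - ‖gradient u x₀‖ ^ 2 := Real.sq_sqrt (hw x₀ hx₀).le
  have hupos' := hupos x₀ hx₀
  -- derive gradient v = w⁻¹ • gradient u
  have hsmul : u x₀ • gradient u x₀ = (u x₀ * w) • gradient v (Y x₀) := by
    have h1 : x₀ - Y x₀ = v (Y x₀) • gradient v (Y x₀) := sub_eq_of_eq_add' hvec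
    conv at h1 => lhs; rw [hY x₀]
    rw [sub_sub_cancel] at h1
    rw [h1, hv x₀ hx₀]
  have hgradv : gradient v (Y x₀) = w⁻¹ • gradient u x₀ := by
    have huw : u x₀ * w ≠ 0 := (mul_pos hupos' hwpos).ne'
    have := congrArg (fun z => (u x₀ * w)⁻¹ • z) hsmul
    simp only [smul_smul] at this
    rw [inv_mul_cancel₀ huw, one_smul] at this
    rw [← this]
    congr 1
    field_simp
  have hnormv : 1 + ‖gradient v (Y x₀)‖ ^ 2 = (w⁻¹) ^ 2 := by
    rw [hgradv, norm_smul, Real.norm_eq_abs, abs_of_pos (inv_pos.2 hwpos), mul_pow]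
    have : ‖gradient u x₀‖ ^ 2 = 1 - w ^ 2 := by rw [hw2]; ring
    rw [this]
    field_simp
    ring
  have hsqrt : Real.sqrt (1 + ‖gradient v (Y x₀)‖ ^ 2) = w⁻¹ := by
    rw [hnormv, Real.sqrt_sq (inv_pos.2 hwpos).le]
  refine ⟨key1 x₀ hx₀, hsqrt, ?_, hgradq, hhessq⟩
  rw [hv x₀ hx₀, hsqrt, ← hwdef]
  field_simp


end
end

section
/- Let n ≥ 1 and let K = {λ ∈ ℝⁿ : λᵢ > 0 for all i}. Suppose f : K → ℝ is differentiable, concave on K, positively homogeneous of degree one, and f(1,…,1) = 1. Then Σᵢ ∂f/∂λᵢ(λ) ≥ 1 for every λ ∈ K. -/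
open scoped BigOperators

noncomputable section

/-- inequality (1.17): for a concave, degree-one homogeneous
normalized curvature function, `Σᵢ ∂f/∂λᵢ ≥ 1` on `K`. -/
theorem sum_partials_ge_one
    (n : ℕ) (hn : 1 ≤ n) (f : (Fin n → ℝ) → ℝ)
    (hdiff : ∀ lam ∈ Kcone n, DifferentiableAt ℝ f lam)
    (hconc : ConcaveOn ℝ (Kcone n) f)
    (hhom : ∀ t > (0 : ℝ), ∀ lam ∈ Kcone n, f (t • lam) = t * f lam)
    (hnorm : f (fun _ => 1) = 1) :
    ∀ lam ∈ Kcone n, 1 ≤ ∑ i, fderiv ℝ f lam (Pi.single i 1) := by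
  intro lam hlam
  set L := fderiv ℝ f lam with hL
  have hone : (fun _ : Fin n => (1:ℝ)) ∈ Kcone n := fun i => one_pos
  -- Euler's relation : L lam = f lam
  have euler : L lam = f lam := by
    have hc : HasDerivAt (fun t : ℝ => t • lam) ((1:ℝ) • lam) 1 :=
      (hasDerivAt_id (1:ℝ)).smul_const lam
    have h1 : HasDerivAt (fun t : ℝ => f (t • lam)) (L lam) 1 := by
      have hf1 : HasFDerivAt f L ((1:ℝ) • lam) := by
        simpa using (hdiff lam hlam).hasFDerivAt
      simpa [Function.comp_def] using hf1.comp_hasDerivAt 1 hc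
    have heq : (fun t : ℝ => f (t • lam)) =ᶠ[nhds 1] (fun t : ℝ => t * f lam) := by
      filter_upwards [lt_mem_nhds (show (0:ℝ) < 1 by norm_num)] with t ht
      exact hhom t ht lam hlam
    have h1' : HasDerivAt (fun t : ℝ => t * f lam) (L lam) 1 :=
      h1.congr_of_eventuallyEq heq.symm
    have h2 : HasDerivAt (fun t : ℝ => t * f lam) (f lam) 1 := by
      simpa using (hasDerivAt_id (1:ℝ)).mul_const (f lam)
    exact h1'.unique h2
  -- gradient inequality at the point (1,...,1)
  set v : Fin n → ℝ := (fun _ => 1) - lam with hv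
  have key : f (fun _ => 1) - f lam ≤ L v := by
    have hcv : HasDerivAt (fun t : ℝ => lam + t • v) v 0 := by
      have : HasDerivAt (fun t : ℝ => t • v) ((1:ℝ) • v) 0 :=
        (hasDerivAt_id (0:ℝ)).smul_const v
      simpa using this.const_add lam
    have hg : HasDerivAt (fun t : ℝ => f (lam + t • v)) (L v) 0 := by
      have hf0 : HasFDerivAt f L (lam + (0:ℝ) • v) := by
        simpa using (hdiff lam hlam).hasFDerivAt
      simpa [Function.comp_def] using hf0.comp_hasDerivAt 0 hcv
    have hslope : Filter.Tendsto (slope (fun t : ℝ => f (lam + t • v)) 0)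
        (nhdsWithin 0 {(0:ℝ)}ᶜ) (nhds (L v)) :=
      hasDerivAt_iff_tendsto_slope.mp hg
    have hslope' : Filter.Tendsto (slope (fun t : ℝ => f (lam + t • v)) 0)
        (nhdsWithin 0 (Set.Ioi 0)) (nhds (L v)) :=
      hslope.mono_left (nhdsWithin_mono _ (fun x hx => ne_of_gt hx))
    refine ge_of_tendsto hslope' ?_
    have hmem : Set.Ioc (0:ℝ) 1 ∈ nhdsWithin (0:ℝ) (Set.Ioi 0) :=
      Ioc_mem_nhdsGT_of_mem ⟨le_refl 0, one_pos⟩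
    filter_upwards [hmem] with t ht
    have ht0 : 0 < t := ht.1
    have ht1 : t ≤ 1 := ht.2
    have hpt : lam + t • v = (1 - t) • lam + t • (fun _ : Fin n => (1:ℝ)) := by
      funext i
      simp [hv, Pi.sub_apply, Pi.smul_apply, smul_eq_mul]
      ring
    have hcc := hconc.2 hlam hone (by linarith : (0:ℝ) ≤ 1 - t) ht0.le (by ring)
    rw [← hpt] at hcc
    have hthis : t * (f (fun _ => 1) - f lam) ≤ f (lam + t • v) - f lam := by
      simp only [smul_eq_mul] at hcc
      linarith
    rw [slope_def_field]
    simp only [zero_smul, add_zero, sub_zero]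
    rw [le_div_iff₀ ht0]
    linear_combination hthis
  -- put things together
  have hsum : ∑ i, L (Pi.single i 1) = L ((fun _ => 1) : Fin n → ℝ) := by
    rw [← map_sum]
    congr 1
    funext j
    simp [Finset.sum_apply, Pi.single_apply]
  have hdecomp : L ((fun _ => 1) : Fin n → ℝ) = L v + L lam := by
    rw [← map_add]
    congr 1
    funext i
    simp [hv]
  rw [hsum, hdecomp, euler]
  have := key
  rw [hnorm] at this
  linarith

end
end

section
/- Let n ≥ 1 and let K = {λ ∈ ℝⁿ : λᵢ > 0 for all i}. Suppose f : K → ℝ is differentiable, positive on K, positively homogeneous of degree one, f(1,…,1) = 1, and the dual function f*(λ) := (f(1/λ₁,…,1/λₙ))^{−1} is concave on K. Then Σᵢ λᵢ² ∂f/∂λᵢ(λ) ≥ f(λ)² for every λ ∈ K. -/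
open scoped BigOperators

noncomputable section

lemma clm_apply_eq_sum {n : ℕ} (L : (Fin n → ℝ) →L[ℝ] ℝ) (v : Fin n → ℝ) :
    L v = ∑ i, v i * L (Pi.single i 1) := by
  have hv : v = ∑ i, v i • (Pi.single i 1 : Fin n → ℝ) := by
    conv_lhs => rw [pi_eq_sum_univ v]
    refine Finset.sum_congr rfl fun i _ => ?_
    congr 1
    funext j
    simp [Pi.single_apply, eq_comm]
  conv_lhs => rw [hv]
  simp [map_sum, map_smul, smul_eq_mul]

/-- inequality (1.18): if the dual function
`f*(λ) = (f(1/λ))⁻¹` is concave, then `Σᵢ λᵢ² ∂f/∂λᵢ(λ) ≥ f(λ)²` on `K`. -/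
theorem sum_sq_partials_ge_f_sq
    (n : ℕ) (hn : 1 ≤ n) (f : (Fin n → ℝ) → ℝ)
    (hdiff : ∀ lam ∈ Kcone n, DifferentiableAt ℝ f lam)
    (hpos : ∀ lam ∈ Kcone n, 0 < f lam)
    (hhom : ∀ t > (0 : ℝ), ∀ lam ∈ Kcone n, f (t • lam) = t * f lam)
    (hnorm : f (fun _ => 1) = 1)
    (hdualconc : ConcaveOn ℝ (Kcone n) (fun lam => (f fun i => (lam i)⁻¹)⁻¹)) :
    ∀ lam ∈ Kcone n,
      (f lam) ^ 2 ≤ ∑ i, (lam i) ^ 2 * fderiv ℝ f lam (Pi.single i 1) := by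
  intro lam hlam
  set D := fderiv ℝ f lam with hDdef
  have hDf : HasFDerivAt f D lam := (hdiff lam hlam).hasFDerivAt
  have hflam : 0 < f lam := hpos lam hlam
  -- Euler identity for f at lam
  have hEuler : D lam = f lam := by
    have hline : HasDerivAt (fun t : ℝ => t • lam) lam 1 := by
      simpa using (hasDerivAt_id (1:ℝ)).smul_const lam
    have h1 : HasDerivAt (fun t : ℝ => f (t • lam)) (D lam) 1 := by
      have hDf1 : HasFDerivAt f D ((fun t : ℝ => t • lam) 1) := by
        simpa using hDf
      exact hDf1.comp_hasDerivAt 1 hline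
    have h2 : HasDerivAt (fun t : ℝ => t * f lam) (f lam) 1 := by
      simpa using (hasDerivAt_id (1:ℝ)).mul_const (f lam)
    have heq : (fun t : ℝ => f (t • lam)) =ᶠ[nhds (1:ℝ)] fun t => t * f lam := by
      filter_upwards [Ioi_mem_nhds (by norm_num : (0:ℝ) < 1)] with t ht
      exact hhom t ht lam hlam
    exact h1.unique (h2.congr_of_eventuallyEq heq)
  set x : Fin n → ℝ := fun i => (lam i)⁻¹ with hxdef
  have hx : x ∈ Kcone n := fun i => inv_pos.mpr (hlam i)
  have hxinv : (fun i => (x i)⁻¹) = lam := by funext i; simp [hxdef]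
  set y : Fin n → ℝ := fun _ => 1 with hydef
  have hy : y ∈ Kcone n := fun i => one_pos
  set G : (Fin n → ℝ) → ℝ := fun mu => (f fun i => (mu i)⁻¹)⁻¹ with hGdef
  -- derivative of the coordinatewise inversion at x
  set Phi : (Fin n → ℝ) →L[ℝ] (Fin n → ℝ) :=
    ContinuousLinearMap.pi (fun i : Fin n => (-(x i ^ 2)⁻¹) • ContinuousLinearMap.proj i)
    with hPhidef
  have hinvmap : HasFDerivAt (fun ν : Fin n → ℝ => fun i => (ν i)⁻¹) Phi x := by
    refine hasFDerivAt_pi.mpr fun i => ?_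
    have h1 : HasDerivAt (fun s : ℝ => s⁻¹) (-(x i ^ 2)⁻¹) (x i) :=
      hasDerivAt_inv (ne_of_gt (hx i))
    have h2 : HasFDerivAt (𝕜 := ℝ) (fun ν : Fin n → ℝ => ν i)
        (ContinuousLinearMap.proj i) x := hasFDerivAt_apply i x
    exact h1.comp_hasFDerivAt x h2
  have hFx : HasFDerivAt (fun ν : Fin n → ℝ => f fun i => (ν i)⁻¹) (D.comp Phi) x := by
    have hDf' : HasFDerivAt f D ((fun ν : Fin n → ℝ => fun i => (ν i)⁻¹) x) := by
      simpa [hxinv] using hDf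
    exact hDf'.comp x hinvmap
  set L : (Fin n → ℝ) →L[ℝ] ℝ := (-(f lam ^ 2)⁻¹) • (D.comp Phi) with hLdef
  have hGx : HasFDerivAt G L x := by
    have hval : (fun ν : Fin n → ℝ => f fun i => (ν i)⁻¹) x = f lam := by
      simp [hxinv]
    have h1 : HasDerivAt (fun s : ℝ => s⁻¹) (-(f lam ^ 2)⁻¹)
        ((fun ν : Fin n → ℝ => f fun i => (ν i)⁻¹) x) := by
      rw [hval]; exact hasDerivAt_inv (ne_of_gt hflam)
    exact h1.comp_hasFDerivAt x hFx
  -- values of L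
  have hLapp : ∀ v, L v = (f lam ^ 2)⁻¹ * D (fun i => (x i ^ 2)⁻¹ * v i) := by
    intro v
    have : Phi v = fun i => (-(x i ^ 2)⁻¹) * v i := by
      funext i; simp [hPhidef]
    rw [hLdef]
    simp only [ContinuousLinearMap.smul_apply, ContinuousLinearMap.comp_apply, this,
      smul_eq_mul]
    have : (fun i => -(x i ^ 2)⁻¹ * v i) = -(fun i => (x i ^ 2)⁻¹ * v i) := by
      funext i; simp [neg_mul]
    rw [this, map_neg]
    ring
  have hx2 : ∀ i, (x i ^ 2)⁻¹ = lam i ^ 2 := by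
    intro i; simp [hxdef, inv_pow]
  have hLx : L x = (f lam)⁻¹ := by
    rw [hLapp]
    have : (fun i => (x i ^ 2)⁻¹ * x i) = lam := by
      funext i
      rw [hx2 i]
      simp only [hxdef]
      rw [pow_two, mul_inv_cancel_right₀ (ne_of_gt (hlam i))]
    rw [this, hEuler]
    field_simp
  set S : ℝ := D (fun i => lam i ^ 2) with hSdef
  have hLy : L y = (f lam ^ 2)⁻¹ * S := by
    rw [hLapp]
    congr 1
    rw [hSdef]
    congr 1
    funext i
    simp [hydef, hx2 i]
  have hGxval : G x = (f lam)⁻¹ := by rw [hGdef]; simp only [hxinv]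
  have hGyval : G y = 1 := by
    rw [hGdef]
    simp only [hydef, inv_one]
    rw [hnorm, inv_one]
  -- directional derivative of G along the segment from x to y
  set d : Fin n → ℝ := y - x with hddef
  have hline : HasDerivAt (fun t : ℝ => x + t • d) d 0 := by
    simpa using ((hasDerivAt_id (0:ℝ)).smul_const d).const_add x
  have hphi : HasDerivAt (fun t : ℝ => G (x + t • d)) (L d) 0 := by
    have hGx0 : HasFDerivAt G L ((fun t : ℝ => x + t • d) 0) := by
      simpa using hGx
    exact hGx0.comp_hasDerivAt 0 hline
  -- concavity gives the slope bound
  have hconc : ∀ t ∈ Set.Ioc (0:ℝ) 1, G y - G x ≤ (G (x + t • d) - G x) / t := by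
    intro t ht
    have h := hdualconc.2 hx hy (by linarith [ht.2] : (0:ℝ) ≤ 1 - t) (le_of_lt ht.1)
      (by ring)
    have hpt : (1 - t) • x + t • y = x + t • d := by
      rw [hddef]; module
    rw [hpt] at h
    rw [le_div_iff₀ ht.1]
    simp only [smul_eq_mul] at h
    nlinarith [h]
  have hslope : Filter.Tendsto (fun t => (G (x + t • d) - G x) / t)
      (nhdsWithin 0 (Set.Ioi 0)) (nhds (L d)) := by
    have h0 : (fun t : ℝ => (G (x + t • d) - G x) / t)
        = slope (fun t : ℝ => G (x + t • d)) 0 := by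
      funext t
      simp [slope_def_field]
    rw [h0]
    exact (hasDerivAt_iff_tendsto_slope.mp hphi).mono_left
      (nhdsWithin_mono _ fun t ht => ne_of_gt ht)
  have hkey : G y - G x ≤ L d := by
    refine ge_of_tendsto hslope ?_
    filter_upwards [Ioc_mem_nhdsGT_of_mem (Set.left_mem_Ico.mpr one_pos)] with t ht
    exact hconc t ht
  have hLd : L d = L y - L x := by rw [hddef, map_sub]
  rw [hLd, hLx, hLy, hGxval, hGyval] at hkey
  -- conclude
  have hS : f lam ^ 2 ≤ S := by
    have h2 : (0:ℝ) < f lam ^ 2 := by positivity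
    have : 1 ≤ (f lam ^ 2)⁻¹ * S := by linarith
    calc f lam ^ 2 = f lam ^ 2 * 1 := by ring
      _ ≤ f lam ^ 2 * ((f lam ^ 2)⁻¹ * S) := by
          exact mul_le_mul_of_nonneg_left this (le_of_lt h2)
      _ = S := by field_simp
  calc f lam ^ 2 ≤ S := hS
    _ = ∑ i, lam i ^ 2 * D (Pi.single i 1) := by
        rw [hSdef, clm_apply_eq_sum]
end
end

section
/- Let n ≥ 1, let g̃ and h̃ be real symmetric n×n matrices, and let u > 0 and w ≠ 0 be real numbers. Set g = u^{−2} g̃ and h = u^{−1} h̃ + (u² w)^{−1} g̃. Then for every κ ∈ ℝ, det(h − κ g) = u^{−n} det(h̃ − κ̃ g̃), where κ̃ = (κ − 1/w)/u. In particular, if g̃ is positive definite, then κ is a generalized eigenvalue of the pair (h, g) if and only if (κ − 1/w)/u is a generalized eigenvalue of (h̃, g̃); i.e., the de Sitter principal curvatures κᵢ of a spacelike graph and its Minkowski principal curvatures κ̃ᵢ are related by κᵢ = u κ̃ᵢ + 1/w. -/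
noncomputable section

/-- relation (1.24): comparison of the characteristic equations of
the de Sitter and Minkowski fundamental forms of a spacelike graph:
`det(h − κ g) = u^{−n} det(h̃ − κ̃ g̃)` with `κ̃ = (κ − 1/w)/u`; in particular for
positive definite `g̃`, the generalized eigenvalues are related by `κ = u κ̃ + 1/w`. -/
theorem deSitter_minkowski_curvature_relation
    (n : ℕ) (hn : 1 ≤ n) (gt ht : Matrix (Fin n) (Fin n) ℝ)
    (hgt : gt.IsSymm) (hht : ht.IsSymm)
    (u w : ℝ) (hu : 0 < u) (hw : w ≠ 0)
    (g h : Matrix (Fin n) (Fin n) ℝ)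
    (hg : g = (u ^ 2)⁻¹ • gt)
    (hh : h = u⁻¹ • ht + (u ^ 2 * w)⁻¹ • gt) :
    ∀ κ : ℝ,
      (h - κ • g).det = (u ^ n)⁻¹ * (ht - ((κ - 1 / w) / u) • gt).det ∧
      (gt.PosDef →
        ((h - κ • g).det = 0 ↔ (ht - ((κ - 1 / w) / u) • gt).det = 0)) := by
  intro κ
  have hu0 : u ≠ 0 := ne_of_gt hu
  have key : h - κ • g = u⁻¹ • (ht - ((κ - 1 / w) / u) • gt) := by
    subst hg hh
    ext i j
    simp [Matrix.add_apply, Matrix.sub_apply, Matrix.smul_apply, smul_eq_mul]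
    field_simp
    try ring
  have hdet : (h - κ • g).det = (u ^ n)⁻¹ * (ht - ((κ - 1 / w) / u) • gt).det := by
    rw [key, Matrix.det_smul, Fintype.card_fin, inv_pow]
  refine ⟨hdet, fun _ => ?_⟩
  rw [hdet]
  constructor
  · intro h0
    rcases mul_eq_zero.mp h0 with h1 | h1
    · exact absurd h1 (inv_ne_zero (pow_ne_zero _ hu0))
    · exact h1
  · intro h0; rw [h0, mul_zero]

end
end

section
/- Let n ≥ 1, let Ω ⊂ ℝⁿ be a bounded open set, let ε > 0 and σ > 1, and let f : K → ℝ be symmetric under permutations with ∂f/∂λᵢ > 0 on K for each i and f(1,…,1) = 1, where K is the open positive cone. Let u ∈ C⁰(Ω̄) ∩ C²(Ω) be admissible on Ω with f(κ[u](x)) = σ for every x ∈ Ω and u = ε on ∂Ω. Then u ≥ ε throughout Ω. -/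
open scoped BigOperators Classical
open Filter Matrix

noncomputable section

/-- 1D second-derivative test at a local minimum. -/
lemma lemA (g φ : ℝ → ℝ) (q : ℝ) (hmin : IsLocalMin g 0)
    (hd : ∀ᶠ t in nhds (0:ℝ), HasDerivAt g (φ t) t) (hφ : HasDerivAt φ q 0) : 0 ≤ q := by
  by_contra hq
  push_neg at hq
  have hφ0 : φ 0 = 0 := by
    have h1 : deriv g 0 = φ 0 := hd.self_of_nhds.deriv
    have h2 : deriv g 0 = 0 := hmin.deriv_eq_zero
    rw [h1] at h2; exact h2
  have hslope : Tendsto (slope φ 0) (nhdsWithin 0 {(0:ℝ)}ᶜ) (nhds q) :=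
    hasDerivAt_iff_tendsto_slope.mp hφ
  have hneg : ∀ᶠ t in nhdsWithin (0:ℝ) {(0:ℝ)}ᶜ, slope φ 0 t < 0 :=
    hslope.eventually_lt_const hq
  rw [eventually_nhdsWithin_iff] at hneg
  have hminev : ∀ᶠ t in nhds (0:ℝ), g 0 ≤ g t := hmin
  have hall := (hneg.and (hd.and hminev))
  rw [Metric.eventually_nhds_iff] at hall
  obtain ⟨ε, hε, hP⟩ := hall
  set δ := ε/2 with hδdef
  have hδ : 0 < δ := by positivity
  have hmem : ∀ t ∈ Set.Icc (0:ℝ) δ, dist t (0:ℝ) < ε := by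
    intro t ht
    rw [Real.dist_eq, sub_zero, abs_of_nonneg ht.1]
    linarith [ht.2]
  have hcont : ContinuousOn g (Set.Icc 0 δ) := fun t ht =>
    ((hP (hmem t ht)).2.1.continuousAt).continuousWithinAt
  have hderiv : ∀ t ∈ interior (Set.Icc (0:ℝ) δ), deriv g t < 0 := by
    intro t ht
    rw [interior_Icc] at ht
    have htI : t ∈ Set.Icc (0:ℝ) δ := ⟨ht.1.le, ht.2.le⟩
    have hPt := hP (hmem t htI)
    rw [hPt.2.1.deriv]
    have hs := hPt.1 (by simp [ne_of_gt ht.1])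
    rw [slope_def_field] at hs
    have : (φ t - φ 0) / (t - 0) < 0 := hs
    rw [hφ0, sub_zero, sub_zero] at this
    exact (div_neg_iff.mp this).elim (fun h => (absurd ht.1 (not_lt.mpr h.2.le)))
      (fun h => h.1)
  have hanti := strictAntiOn_of_deriv_neg (convex_Icc 0 δ) hcont hderiv
  have h1 : g δ < g 0 := hanti (Set.left_mem_Icc.mpr hδ.le) (Set.right_mem_Icc.mpr hδ.le) hδ
  have h2 : g 0 ≤ g δ := (hP (hmem δ (Set.right_mem_Icc.mpr hδ.le))).2.2
  linarith

/-- Nonnegativity of the Hessian quadratic form at a local minimum. -/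
lemma hess_qf_nonneg {n : ℕ} (u : Euc n → ℝ) (x₀ : Euc n) (h2 : ContDiffAt ℝ 2 u x₀)
    (hmin : IsLocalMin u x₀) (w : Euc n) : 0 ≤ fderiv ℝ (fderiv ℝ u) x₀ w w := by
  set p : ℝ → Euc n := fun t => x₀ + t • w with hp_def
  have hp : ∀ t : ℝ, HasDerivAt p w t := by
    intro t
    simpa [hp_def] using ((hasDerivAt_id t).smul_const w).const_add x₀
  have hp0 : p 0 = x₀ := by simp [hp_def]
  have hpc : Tendsto p (nhds 0) (nhds x₀) := by
    simpa [hp0] using (hp 0).continuousAt.tendsto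
  have hdiff : ∀ᶠ x in nhds x₀, DifferentiableAt ℝ u x := by
    filter_upwards [h2.eventually (by norm_num)] with x hx
    exact hx.differentiableAt two_ne_zero
  have hd : ∀ᶠ t in nhds (0:ℝ), HasDerivAt (fun s => u (p s)) (fderiv ℝ u (p t) w) t := by
    filter_upwards [hpc.eventually hdiff] with t ht
    exact ht.hasFDerivAt.comp_hasDerivAt t (hp t)
  have hBd : DifferentiableAt ℝ (fderiv ℝ u) x₀ :=
    (h2.fderiv_right (m := 1) (by norm_num)).differentiableAt one_ne_zero
  have hsingle : HasDerivAt (fun t => fderiv ℝ u (p t)) (fderiv ℝ (fderiv ℝ u) x₀ w) 0 := by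
    have hBd' : HasFDerivAt (fderiv ℝ u) (fderiv ℝ (fderiv ℝ u) x₀) (p 0) := hp0 ▸ hBd.hasFDerivAt
    exact hBd'.comp_hasDerivAt 0 (hp 0)
  have hφ : HasDerivAt (fun t => fderiv ℝ u (p t) w) (fderiv ℝ (fderiv ℝ u) x₀ w w) 0 := by
    have := hsingle.clm_apply (hasDerivAt_const 0 w)
    simpa [hp0] using this
  have hmin' : IsLocalMin (fun s => u (p s)) 0 := by
    have : ∀ᶠ t in nhds (0:ℝ), u x₀ ≤ u (p t) := hpc.eventually hmin
    simpa [IsLocalMin, IsMinFilter, hp0] using this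
  exact lemA _ _ _ hmin' hd hφ

/-- An eigenvalue bound for `1 - c • H` when `H` has nonnegative quadratic form. -/
lemma eig_le_one {n : ℕ} (H : Matrix (Fin n) (Fin n) ℝ) (c : ℝ) (hc : 0 < c)
    (hQ : ∀ v : Fin n → ℝ, 0 ≤ v ⬝ᵥ H *ᵥ v)
    (hA : (1 - c • H : Matrix (Fin n) (Fin n) ℝ).IsHermitian) (i : Fin n) :
    hA.eigenvalues i ≤ 1 := by
  set v : EuclideanSpace ℝ (Fin n) := hA.eigenvectorBasis i with hv_def
  have hvne : v ≠ 0 := hA.eigenvectorBasis.orthonormal.ne_zero i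
  have hAv : (1 - c • H) *ᵥ ⇑v = hA.eigenvalues i • ⇑v := hA.mulVec_eigenvectorBasis i
  set s : ℝ := (⇑v) ⬝ᵥ (⇑v) with hs_def
  have hs : 0 < s := by
    obtain ⟨j, hj⟩ : ∃ j, v j ≠ 0 := by
      by_contra h
      push_neg at h
      exact hvne (by ext j; simpa using h j)
    refine Finset.sum_pos' (fun k _ => mul_self_nonneg _) ⟨j, Finset.mem_univ j, ?_⟩
    exact mul_self_pos.mpr hj
  have key : hA.eigenvalues i * s = s - c * ((⇑v) ⬝ᵥ H *ᵥ ⇑v) := by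
    have h1 : (⇑v) ⬝ᵥ ((1 - c • H) *ᵥ ⇑v) = hA.eigenvalues i * s := by
      rw [hAv, dotProduct_smul, smul_eq_mul]
    rw [Matrix.sub_mulVec, Matrix.one_mulVec, Matrix.smul_mulVec,
      dotProduct_sub, dotProduct_smul, smul_eq_mul] at h1
    linarith [h1]
  have hQv := hQ (⇑v)
  nlinarith [mul_nonneg hc.le hQv]

/-- Bilinear expansion of a quadratic form. -/
lemma qf_eq {n : ℕ} (B : EuclideanSpace ℝ (Fin n) →L[ℝ] EuclideanSpace ℝ (Fin n) →L[ℝ] ℝ)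
    (v : Fin n → ℝ) :
    v ⬝ᵥ (Matrix.of fun i j => B (EuclideanSpace.single i 1) (EuclideanSpace.single j 1)) *ᵥ v
      = B (∑ i, v i • EuclideanSpace.single i 1) (∑ j, v j • EuclideanSpace.single j 1) := by
  simp only [map_sum, ContinuousLinearMap.sum_apply, _root_.map_smul,
    ContinuousLinearMap.smul_apply, smul_eq_mul, ContinuousLinearMap.coe_smul', Pi.smul_apply]
  simp only [dotProduct, Matrix.mulVec, Matrix.of_apply, Finset.mul_sum]
  rw [Finset.sum_comm]
  refine Finset.sum_congr rfl (fun i _ => Finset.sum_congr rfl (fun j _ => by ring))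

/-- Monotonicity of `f` along the segment to `(1,…,1)`. -/
lemma f_le_one {n : ℕ} (hn : 1 ≤ n) (f : (Fin n → ℝ) → ℝ)
    (hfmono : ∀ lam ∈ Kcone n, ∀ i, 0 < fderiv ℝ f lam (Pi.single i 1))
    (κ : Fin n → ℝ) (hκpos : ∀ i, 0 < κ i) (hκle : ∀ i, κ i ≤ 1) :
    f κ ≤ f (fun _ => 1) := by
  set d : Fin n → ℝ := fun i => 1 - κ i with hd_def
  set p : ℝ → (Fin n → ℝ) := fun t => κ + t • d with hp_def
  have hpK : ∀ t ∈ Set.Icc (0:ℝ) 1, p t ∈ Kcone n := by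
    intro t ht i
    simp only [hp_def, Pi.add_apply, Pi.smul_apply, smul_eq_mul, hd_def]
    nlinarith [hκpos i, hκle i, ht.1, ht.2]
  have hdiff : ∀ t ∈ Set.Icc (0:ℝ) 1, DifferentiableAt ℝ f (p t) := by
    intro t ht
    by_contra h
    have := hfmono (p t) (hpK t ht) ⟨0, hn⟩
    rw [fderiv_zero_of_not_differentiableAt h] at this
    simp at this
  have hderiv : ∀ t ∈ Set.Icc (0:ℝ) 1,
      HasDerivAt (fun s => f (p s)) (fderiv ℝ f (p t) d) t := by
    intro t ht
    have hp : HasDerivAt p d t := by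
      simpa [hp_def] using ((hasDerivAt_id t).smul_const d).const_add κ
    exact (hdiff t ht).hasFDerivAt.comp_hasDerivAt t hp
  have hnonneg : ∀ t ∈ Set.Icc (0:ℝ) 1, 0 ≤ fderiv ℝ f (p t) d := by
    intro t ht
    have hdsum : d = ∑ i, (d i) • (Pi.single i 1 : Fin n → ℝ) := by
      ext j
      simp [Pi.single_apply]
    rw [hdsum, map_sum]
    refine Finset.sum_nonneg (fun i _ => ?_)
    rw [_root_.map_smul, smul_eq_mul]
    exact mul_nonneg (by simp [hd_def]; linarith [hκle i]) (hfmono (p t) (hpK t ht) i).le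
  obtain ⟨c, hc, hceq⟩ := exists_hasDerivAt_eq_slope (fun s => f (p s))
    (fun t => fderiv ℝ f (p t) d) (by norm_num : (0:ℝ) < 1)
    (fun t ht => ((hderiv t ht).continuousAt).continuousWithinAt)
    (fun t ht => hderiv t ⟨ht.1.le, ht.2.le⟩)
  have h0 : p 0 = κ := by simp [hp_def]
  have h1 : p 1 = fun _ => (1:ℝ) := by
    ext i; simp [hp_def, hd_def]
  have := hnonneg c ⟨hc.1.le, hc.2.le⟩
  rw [hceq] at this
  rw [h0, h1] at this
  simpa using this

/-- Lemma 4.1(i), graph form: an admissible solution of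
`f(κ[u]) = σ > 1` with boundary values `ε` cannot dip below the plane `x_{n+1} = ε`. -/
theorem solution_ge_boundary_value
    (n : ℕ) (hn : 1 ≤ n) (Ω : Set (Euc n)) (hΩo : IsOpen Ω)
    (hΩb : Bornology.IsBounded Ω)
    (ε : ℝ) (hε : 0 < ε) (σ : ℝ) (hσ : 1 < σ)
    (f : (Fin n → ℝ) → ℝ)
    (hfsymm : ∀ lam ∈ Kcone n, ∀ π : Equiv.Perm (Fin n), f (lam ∘ π) = f lam)
    (hfmono : ∀ lam ∈ Kcone n, ∀ i, 0 < fderiv ℝ f lam (Pi.single i 1))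
    (hfnorm : f (fun _ => 1) = 1)
    (u : Euc n → ℝ)
    (hucont : ContinuousOn u (closure Ω))
    (hu2 : ContDiffOn ℝ 2 u Ω)
    (hadm : Admissible Ω u)
    (hfeq : ∀ x ∈ Ω, f (curv u x) = σ)
    (hbd : ∀ x ∈ frontier Ω, u x = ε) :
    ∀ x ∈ Ω, ε ≤ u x := by
  intro x hx
  have hKc : IsCompact (closure Ω) := hΩb.isCompact_closure
  obtain ⟨x₀, hx₀c, hminOn⟩ := hKc.exists_isMinOn ⟨x, subset_closure hx⟩ hucont
  by_cases hx₀ : x₀ ∈ Ω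
  · exfalso
    have hnhds : closure Ω ∈ nhds x₀ :=
      Filter.mem_of_superset (hΩo.mem_nhds hx₀) subset_closure
    have hloc : IsLocalMin u x₀ := hminOn.isLocalMin hnhds
    have h2 : ContDiffAt ℝ 2 u x₀ := hu2.contDiffAt (hΩo.mem_nhds hx₀)
    obtain ⟨hupos, -, hPD⟩ := hadm x₀ hx₀
    have fderiv0 : fderiv ℝ u x₀ = 0 := hloc.fderiv_eq_zero
    have grad0 : grad u x₀ = fun _ => 0 := by
      funext i; simp [grad, fderiv0]
    have gradSq0 : gradSq u x₀ = 0 := by simp [gradSq, grad0]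
    have wF1 : wF u x₀ = 1 := by simp [wF, gradSq0]
    have gamma1 : gammaM u x₀ = 1 := by
      ext i j
      simp [gammaM, grad0]
    have AMeq : AM u x₀ = 1 - u x₀ • hess u x₀ := by
      rw [AM, wF1, gamma1]
      simp
    set B := fderiv ℝ (fderiv ℝ u) x₀ with hB_def
    have Hheq : hess u x₀
        = Matrix.of fun i j => B (EuclideanSpace.single i 1) (EuclideanSpace.single j 1) := by
      ext i j
      simp only [hess, Matrix.of_apply]
      rw [iteratedFDeriv_two_apply]
      simp [hB_def]
    have hQ : ∀ v : Fin n → ℝ, 0 ≤ v ⬝ᵥ hess u x₀ *ᵥ v := by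
      intro v
      rw [Hheq, qf_eq]
      exact hess_qf_nonneg u x₀ h2 hloc _
    have hPD' : (1 - u x₀ • hess u x₀ : Matrix (Fin n) (Fin n) ℝ).PosDef := AMeq ▸ hPD
    have hA' : (1 - u x₀ • hess u x₀ : Matrix (Fin n) (Fin n) ℝ).IsHermitian := hPD'.1
    have hcurv : curv u x₀ = hA'.eigenvalues := by
      show eigs (AM u x₀) = _
      rw [AMeq]
      simp only [eigs]
      rw [dif_pos hA']
    have hκpos : ∀ i, 0 < curv u x₀ i := by
      intro i
      rw [hcurv]
      exact hPD'.eigenvalues_pos i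
    have hκle : ∀ i, curv u x₀ i ≤ 1 := by
      intro i
      rw [hcurv]
      exact eig_le_one _ _ hupos hQ hA' i
    have hle := f_le_one hn f hfmono (curv u x₀) hκpos hκle
    rw [hfnorm, hfeq x₀ hx₀] at hle
    linarith
  · have hfr : x₀ ∈ frontier Ω := by
      rw [hΩo.frontier_eq]
      exact ⟨hx₀c, hx₀⟩
    have := hminOn (subset_closure hx)
    rw [hbd x₀ hfr] at this
    exact this

end
end
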